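/- Let (a_n) be an arithmetic sequence whose ratio sequence (q_n) is unbounded. Then there exists an arithmetic-type sequence (e_n) associated with (a_n) such that the ratio sequence (e_{n+1}/e_n) is unbounded and t_{(e_n)}(𝕋) is countable. -/

import Mathlib

open Filter Topology

noncomputable section

/-- The circle group `𝕋 = ℝ/ℤ`. -/
abbrev Circle1 : Type := AddCircle (1 : ℝ)

/-- An arithmetic sequence `(a_n)_{n ≥ 1}`, with the convention `a 0 = 1`:
a strictly increasing sequence of positive integers with `1 < a 1` and `a n ∣ a (n+1)`. -/
def IsArithSeq (a : ℕ → ℕ) : Prop :=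
  a 0 = 1 ∧ StrictMono a ∧ ∀ n, a n ∣ a (n + 1)

/-- The ratio sequence: `q n = a n / a (n-1)` (so `q 1 = a 1`). -/
def ratioSeq (a : ℕ → ℕ) (n : ℕ) : ℕ := a n / a (n - 1)

/-- The subgroup of `𝕋` characterized by a sequence of integers `(u n)`. -/
def charSub (u : ℕ → ℕ) : Set Circle1 :=
  {x : Circle1 | Tendsto (fun n => (u n) • x) atTop (nhds 0)}

/-- The set `{r·a_{k-1} : k ≥ 1, 1 ≤ r ≤ q_k - 1}` whose increasing enumeration is `(d_n)`. -/
def DSet (a : ℕ → ℕ) : Set ℕ :=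
  {m | ∃ k, 1 ≤ k ∧ ∃ r, 1 ≤ r ∧ r ≤ ratioSeq a k - 1 ∧ m = r * a (k - 1)}

/-- `(d_n)` is the strictly increasing enumeration of `DSet a`. -/
def IsDSeq (a d : ℕ → ℕ) : Prop := StrictMono d ∧ Set.range d = DSet a

/-- An arithmetic-type sequence associated with the arithmetic sequence `(a_n)`:
a strictly increasing sequence of positive integers whose set of values contains all the
values `a k` (for `k ≥ 1`) and is contained in `DSet a`. -/
def IsArithTypeSeq (a e : ℕ → ℕ) : Prop :=
  StrictMono e ∧ (∀ k, 1 ≤ k → a k ∈ Set.range e) ∧ Set.range e ⊆ DSet a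

/-- `(c_n)_{n ≥ 1}` is the canonical representation of `x ∈ 𝕋` w.r.t. the arithmetic
sequence `(a_n)`: `0 ≤ c n ≤ q n - 1` for all `n ≥ 1`, `c n < q n - 1` infinitely often,
and `x = Σ_{n ≥ 1} c n / a n` in `𝕋`. -/
def IsCanonicalRep (a c : ℕ → ℕ) (x : Circle1) : Prop :=
  (∀ n, 1 ≤ n → c n ≤ ratioSeq a n - 1) ∧
  {n | 1 ≤ n ∧ c n < ratioSeq a n - 1}.Infinite ∧
  x = ((∑' n : ℕ, (c (n + 1) : ℝ) / (a (n + 1) : ℝ) : ℝ) : Circle1)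

/-- The support of a digit sequence: `supp(x) = {n ≥ 1 : c n ≠ 0}`. -/
def suppOf (c : ℕ → ℕ) : Set ℕ := {n | 1 ≤ n ∧ c n ≠ 0}

section Aux

/-- distance from a real number to the nearest integer -/
def nint (x : ℝ) : ℝ := |x - round x|

lemma nint_nonneg (x : ℝ) : 0 ≤ nint x := abs_nonneg _

lemma nint_le_half (x : ℝ) : nint x ≤ 1/2 := abs_sub_round x

lemma nint_eq_abs {x : ℝ} (h : |x| ≤ 1/2) : nint x = |x| := by
  rcases eq_or_lt_of_le (le_of_abs_le h) with h1 | h1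
  · -- x = 1/2
    have : x = 1/2 := h1.symm ▸ rfl
    subst this
    have : round (1/2 : ℝ) = 1 := by
      rw [round_eq]; norm_num
    simp [nint, this]
    norm_num
  · have hlo : -(1/2 : ℝ) ≤ x := neg_le_of_abs_le h
    have : round x = 0 := by
      rw [round_eq]
      apply Int.floor_eq_zero_iff.2
      constructor <;> simp <;> linarith
    simp [nint, this]

lemma nint_le_abs (x : ℝ) : nint x ≤ |x| := by
  rcases le_or_gt (|x|) (1/2) with h | h
  · rw [nint_eq_abs h]
  · exact (nint_le_half x).trans h.le

lemma nint_add_int (x : ℝ) (z : ℤ) : nint (x + z) = nint x := by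
  unfold nint
  rw [round_add_intCast]
  push_cast
  ring_nf

lemma nint_le_sub_int (x : ℝ) (z : ℤ) : nint x ≤ |x - z| := by
  have : nint x = nint (x - z) := by
    have h := nint_add_int (x - z) z
    simp at h
    exact h
  rw [this]
  exact nint_le_abs _

lemma nint_add_le (u v : ℝ) : nint (u + v) ≤ nint u + nint v := by
  calc nint (u + v) ≤ |u + v - (round u + round v : ℤ)| := nint_le_sub_int _ _
    _ ≤ |u - round u| + |v - round v| := by
        push_cast
        have : u + v - ((round u : ℝ) + round v) = (u - round u) + (v - round v) := by ring
        rw [this]; exact abs_add_le _ _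
    _ = nint u + nint v := rfl

lemma nint_neg (x : ℝ) : nint (-x) = nint x := by
  have h1 : ∀ y : ℝ, nint (-y) ≤ nint y := by
    intro y
    calc nint (-y) ≤ |(-y) - (-(round y) : ℤ)| := nint_le_sub_int _ _
      _ = |y - round y| := by push_cast; rw [← abs_neg]; ring_nf
      _ = nint y := rfl
  apply le_antisymm (h1 x)
  have := h1 (-x); simpa using this

lemma nint_sub_le (u v : ℝ) : nint v ≤ nint (u + v) + nint u := by
  have : v = (u + v) + (-u) := by ring
  calc nint v = nint ((u + v) + (-u)) := by rw [← this]
    _ ≤ nint (u + v) + nint (-u) := nint_add_le _ _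
    _ = nint (u + v) + nint u := by rw [nint_neg]

lemma nint_two_mul {x : ℝ} (h : nint x ≤ 1/4) : nint (2 * x) = 2 * nint x := by
  have key : nint (2 * x) = nint (2 * (x - round x)) := by
    have : 2 * x = 2 * (x - round x) + ((2 * round x : ℤ) : ℝ) := by push_cast; ring
    rw [this, nint_add_int]
  rw [key, nint_eq_abs (by rw [abs_mul]; unfold nint at h; rw [abs_two]; linarith)]
  rw [abs_mul, abs_two]
  rfl

lemma nint_doubling {δ : ℝ} (hδ : δ < 1/4) :
    ∀ J : ℕ, ∀ y : ℝ, (∀ j ≤ J, nint (2^j * y) ≤ δ) → nint y ≤ δ / 2^J := by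
  intro J
  induction J with
  | zero => intro y h; simpa using h 0 le_rfl
  | succ J ih =>
    intro y h
    have h0 : nint y ≤ δ := by simpa using h 0 (Nat.zero_le _)
    have hd : nint (2 * y) = 2 * nint y := nint_two_mul (by linarith)
    have h2 : ∀ j ≤ J, nint (2^j * (2 * y)) ≤ δ := by
      intro j hj
      have := h (j+1) (by omega)
      have e : (2:ℝ)^(j+1) * y = 2^j * (2*y) := by ring
      rwa [e] at this
    have := ih (2 * y) h2
    rw [hd] at this
    have : nint y ≤ δ / 2^J / 2 := by linarith
    calc nint y ≤ δ / 2^J / 2 := this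
      _ = δ / 2^(J+1) := by rw [pow_succ]; ring

/-- per-block forcing lemma -/
lemma block_force (y ε : ℝ) (Q m j1 : ℕ) (hQ : 2 ≤ Q) (hε : 0 < ε) (hε16 : ε ≤ 1/16)
    (H2 : ∀ j ≤ j1, nint (2^j * 2^m * y) ≤ ε ∧ nint (2^j * (2^m+1) * y) ≤ ε)
    (H3 : (Q:ℝ) ≤ 8 * 2^(m + j1))
    (H4 : (2:ℝ)^m ≤ 4 * 2^j1) :
    nint y ≤ 8 * ε / Q := by
  -- Step 1: pairs give chain
  have step1 : ∀ j ≤ j1, nint (2^j * y) ≤ 2 * ε := by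
    intro j hj
    obtain ⟨h1, h2⟩ := H2 j hj
    have e : (2:ℝ)^j * (2^m+1) * y = 2^j * 2^m * y + 2^j * y := by ring
    have := nint_sub_le ((2:ℝ)^j * 2^m * y) ((2:ℝ)^j * y)
    rw [← e] at this
    linarith
  -- Step 2: nint y ≤ 2ε / 2^j1
  have step2 : nint y ≤ 2 * ε / 2^j1 :=
    nint_doubling (by linarith) j1 y step1
  -- Step 3: nint (2^m * y) ≤ ε / 2^j1
  have step3 : nint ((2:ℝ)^m * y) ≤ ε / 2^j1 := by
    apply nint_doubling (by linarith) j1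
    intro j hj
    have := (H2 j hj).1
    have e : (2:ℝ)^j * 2^m * y = 2^j * (2^m * y) := by ring
    rwa [e] at this
  -- Step 4: combine
  have hp1 : (0:ℝ) < 2^j1 := by positivity
  have hpm : (0:ℝ) < 2^m := by positivity
  have key : (2:ℝ)^m * nint y ≤ ε / 2^j1 := by
    have hsmall : |(2:ℝ)^m * (y - round y)| ≤ 1/2 := by
      rw [abs_mul, abs_of_pos hpm]
      have : (2:ℝ)^m * |y - round y| ≤ 2^m * (2 * ε / 2^j1) := by
        apply mul_le_mul_of_nonneg_left step2 hpm.le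
      have h2 : (2:ℝ)^m * (2 * ε / 2^j1) ≤ 4 * 2^j1 * (2 * ε / 2^j1) := by
        apply mul_le_mul_of_nonneg_right H4
        positivity
      have h3 : (4:ℝ) * 2^j1 * (2 * ε / 2^j1) = 8 * ε := by
        field_simp; ring
      rw [h3] at h2
      linarith
    have e1 : nint ((2:ℝ)^m * y) = nint ((2:ℝ)^m * (y - round y)) := by
      have : (2:ℝ)^m * y = 2^m * (y - round y) + (((2^m : ℕ) * round y : ℤ) : ℝ) := by
        push_cast; ring
      rw [this, nint_add_int]
    rw [e1, nint_eq_abs hsmall, abs_mul, abs_of_pos hpm] at step3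
    exact step3
  -- nint y ≤ ε / 2^(m+j1) ≤ 8 ε / Q
  have h5 : nint y ≤ ε / 2^(m+j1) := by
    rw [pow_add]
    rw [le_div_iff₀ (by positivity)]
    rw [le_div_iff₀ (by positivity : (0:ℝ) < 2^j1), mul_comm] at key
    nlinarith [nint_nonneg y]
  have hQ0 : (0:ℝ) < Q := by positivity
  calc nint y ≤ ε / 2^(m+j1) := h5
    _ ≤ 8 * ε / Q := by
      rw [div_le_div_iff₀ (by positivity) hQ0]
      calc ε * Q ≤ ε * (8 * 2^(m+j1)) := by
            apply mul_le_mul_of_nonneg_left H3 hε.le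
        _ = 8 * ε * 2^(m+j1) := by ring

def kkAux (a : ℕ → ℕ) (hq : ∀ C : ℕ, ∃ n, 1 ≤ n ∧ C < ratioSeq a n) : ℕ → ℕ
  | 0 => 0
  | m+1 => (hq (max (a (kkAux a hq m)) (2^(3*(m+1)+4)))).choose

lemma kkAux_spec (a : ℕ → ℕ) (hq : ∀ C : ℕ, ∃ n, 1 ≤ n ∧ C < ratioSeq a n) (m : ℕ) :
    1 ≤ kkAux a hq (m+1) ∧
    a (kkAux a hq m) < ratioSeq a (kkAux a hq (m+1)) ∧
    2^(3*(m+1)+4) < ratioSeq a (kkAux a hq (m+1)) := by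
  have h := (hq (max (a (kkAux a hq m)) (2^(3*(m+1)+4)))).choose_spec
  exact ⟨h.1, lt_of_le_of_lt (le_max_left _ _) h.2, lt_of_le_of_lt (le_max_right _ _) h.2⟩

lemma ratioSeq_le_self (a : ℕ → ℕ) (k : ℕ) : ratioSeq a k ≤ a k := Nat.div_le_self _ _

lemma kkAux_strictMono (a : ℕ → ℕ) (ha : IsArithSeq a)
    (hq : ∀ C : ℕ, ∃ n, 1 ≤ n ∧ C < ratioSeq a n) : StrictMono (kkAux a hq) := by
  apply strictMono_nat_of_lt_succ
  intro m
  by_contra h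
  push_neg at h
  have h1 := (kkAux_spec a hq m).2.1
  have h2 : ratioSeq a (kkAux a hq (m+1)) ≤ a (kkAux a hq (m+1)) := ratioSeq_le_self a _
  have h3 : a (kkAux a hq (m+1)) ≤ a (kkAux a hq m) := ha.2.1.monotone h
  omega

open Classical in
def mkOf (a : ℕ → ℕ) (hq : ∀ C : ℕ, ∃ n, 1 ≤ n ∧ C < ratioSeq a n) (k : ℕ) : ℕ :=
  if h : ∃ m, kkAux a hq (m+1) = k then h.choose + 1 else 0

lemma mkOf_special (a : ℕ → ℕ) (ha : IsArithSeq a)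
    (hq : ∀ C : ℕ, ∃ n, 1 ≤ n ∧ C < ratioSeq a n) (m : ℕ) :
    mkOf a hq (kkAux a hq (m+1)) = m + 1 := by
  unfold mkOf
  rw [dif_pos ⟨m, rfl⟩]
  have h := (⟨m, rfl⟩ : ∃ m', kkAux a hq (m'+1) = kkAux a hq (m+1)).choose_spec
  have := (kkAux_strictMono a ha hq).injective h
  omega

lemma mkOf_big (a : ℕ → ℕ) (hq : ∀ C : ℕ, ∃ n, 1 ≤ n ∧ C < ratioSeq a n) (k : ℕ)
    (h : 1 ≤ mkOf a hq k) :
    2^(3 * mkOf a hq k + 4) < ratioSeq a k := by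
  unfold mkOf at *
  split_ifs at * with hex
  · have h1 := hex.choose_spec
    have h2 := (kkAux_spec a hq hex.choose).2.2
    rw [h1] at h2
    exact h2
  · omega

def r1of (a : ℕ → ℕ) (hq : ∀ C : ℕ, ∃ n, 1 ≤ n ∧ C < ratioSeq a n) (k : ℕ) : ℕ :=
  2^(mkOf a hq k)

def RsetP (a : ℕ → ℕ) (hq : ∀ C : ℕ, ∃ n, 1 ≤ n ∧ C < ratioSeq a n) (k r : ℕ) : Prop :=
  r = 1 ∨ ∃ j, (r = 2^j * r1of a hq k ∨ r = 2^j * (r1of a hq k + 1)) ∧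
    2^j * (r1of a hq k + 1) ≤ ratioSeq a k - 1

def EmemP (a : ℕ → ℕ) (hq : ∀ C : ℕ, ∃ n, 1 ≤ n ∧ C < ratioSeq a n) (x : ℕ) : Prop :=
  ∃ k, 1 ≤ k ∧ ∃ r, RsetP a hq k r ∧ x = r * a (k-1)

lemma apos (a : ℕ → ℕ) (ha : IsArithSeq a) : ∀ n, 0 < a n := by
  intro n
  have := ha.2.1.monotone (Nat.zero_le n)
  have := ha.1
  omega

lemma aQ (a : ℕ → ℕ) (ha : IsArithSeq a) : ∀ k, 1 ≤ k → a k = ratioSeq a k * a (k-1) := by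
  intro k hk
  have hd : a (k-1) ∣ a k := by
    have := ha.2.2 (k-1)
    have he : k - 1 + 1 = k := by omega
    rwa [he] at this
  unfold ratioSeq
  exact (Nat.div_mul_cancel hd).symm

lemma Q2 (a : ℕ → ℕ) (ha : IsArithSeq a) : ∀ k, 1 ≤ k → 2 ≤ ratioSeq a k := by
  intro k hk
  have h1 : a (k-1) < a k := ha.2.1 (by omega)
  have h2 := aQ a ha k hk
  have h3 := apos a ha (k-1)
  by_contra h
  push_neg at h
  interval_cases (ratioSeq a k) <;> omega

lemma Rset_bounds (a : ℕ → ℕ) (ha : IsArithSeq a)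
    (hq : ∀ C : ℕ, ∃ n, 1 ≤ n ∧ C < ratioSeq a n) (k r : ℕ)
    (hk : 1 ≤ k) (hr : RsetP a hq k r) :
    1 ≤ r ∧ r ≤ ratioSeq a k - 1 := by
  have hQ2 := Q2 a ha k hk
  rcases hr with rfl | ⟨j, hj, hle⟩
  · omega
  constructor
  · rcases hj with rfl | rfl
    · have : 0 < 2^j * r1of a hq k := by
        have : 0 < r1of a hq k := Nat.pow_pos (by norm_num)
        positivity
      omega
    · have : 0 < 2^j * (r1of a hq k + 1) := by positivity
      omega
  · rcases hj with rfl | rfl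
    · calc 2^j * r1of a hq k ≤ 2^j * (r1of a hq k + 1) := Nat.mul_le_mul_left _ (by omega)
        _ ≤ ratioSeq a k - 1 := hle
    · exact hle

lemma a_mem_E (a : ℕ → ℕ) (hq : ∀ C : ℕ, ∃ n, 1 ≤ n ∧ C < ratioSeq a n) (k : ℕ) :
    EmemP a hq (a k) := by
  refine ⟨k+1, by omega, 1, Or.inl rfl, ?_⟩
  simp

lemma E_infinite (a : ℕ → ℕ) (ha : IsArithSeq a)
    (hq : ∀ C : ℕ, ∃ n, 1 ≤ n ∧ C < ratioSeq a n) : (setOf (EmemP a hq)).Infinite :=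
  Set.infinite_of_injective_forall_mem (ha.2.1.injective) (a_mem_E a hq)

lemma block_apply (a : ℕ → ℕ) (ha : IsArithSeq a)
    (hq : ∀ C : ℕ, ∃ n, 1 ≤ n ∧ C < ratioSeq a n) (xt ε : ℝ) (k : ℕ) (hk : 1 ≤ k)
    (hε : 0 < ε) (hε16 : ε ≤ 1/16)
    (hB : ∀ r, RsetP a hq k r → nint (((r * a (k-1) : ℕ) : ℝ) * xt) ≤ ε) :
    nint ((a (k-1) : ℝ) * xt) ≤ 8 * ε / (ratioSeq a k : ℝ) := by
  set Q := ratioSeq a k with hQdef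
  set m := mkOf a hq k with hmdef
  set y := (a (k-1) : ℝ) * xt with hydef
  have hQ2 : 2 ≤ Q := Q2 a ha k hk
  have hbase_of_m : 1 ≤ m → 2^m + 1 ≤ Q - 1 := by
    intro hm
    have hQm : 2^(3*m+4) < Q := mkOf_big a hq k hm
    have h1 : 2^m + 1 ≤ 2^(m+1) := by
      have : 1 ≤ 2^m := Nat.one_le_two_pow
      rw [pow_succ]; omega
    have h2 : 2^(m+1) ≤ 2^(3*m+4) := Nat.pow_le_pow_right (by norm_num) (by omega)
    omega
  by_cases hbase : 2^m + 1 ≤ Q - 1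
  · -- full chain case
    set P : ℕ → Prop := fun j => 2^j * (2^m + 1) ≤ Q - 1 with hPdef
    have hP0 : P 0 := by simpa [hPdef] using hbase
    set j1 := Nat.findGreatest P Q with hj1def
    have hPj1 : P j1 := Nat.findGreatest_spec (Nat.zero_le Q) hP0
    have hmax : ¬ P (j1 + 1) := by
      by_cases hle : j1 + 1 ≤ Q
      · exact Nat.findGreatest_is_greatest (by omega) hle
      · intro hcon
        have h1 : j1 + 1 < 2^(j1+1) := Nat.lt_two_pow_self
        have h2 : 2^(j1+1) ≤ 2^(j1+1) * (2^m + 1) := Nat.le_mul_of_pos_right _ (by positivity)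
        simp only [hPdef] at hcon
        omega
    -- H2 : chain constraints
    have hchain : ∀ j ≤ j1, nint (2^j * 2^m * y) ≤ ε ∧ nint (2^j * (2^m+1) * y) ≤ ε := by
      intro j hj
      have hPj : 2^j * (2^m + 1) ≤ Q - 1 := by
        calc 2^j * (2^m+1) ≤ 2^j1 * (2^m+1) :=
              Nat.mul_le_mul_right _ (Nat.pow_le_pow_right (by norm_num) hj)
          _ ≤ Q - 1 := hPj1
      have hr1mem : RsetP a hq k (2^j * 2^m) := Or.inr ⟨j, Or.inl rfl, hPj⟩
      have hr2mem : RsetP a hq k (2^j * (2^m + 1)) := Or.inr ⟨j, Or.inr rfl, hPj⟩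
      have e1 : (((2^j * 2^m) * a (k-1) : ℕ) : ℝ) * xt = 2^j * 2^m * y := by
        push_cast [hydef]; ring
      have e2 : (((2^j * (2^m+1)) * a (k-1) : ℕ) : ℝ) * xt = 2^j * (2^m+1) * y := by
        push_cast [hydef]; ring
      constructor
      · have := hB _ hr1mem; rwa [e1] at this
      · have := hB _ hr2mem; rwa [e2] at this
    -- H3
    have hH3n : Q ≤ 4 * 2^(m + j1) := by
      simp only [hPdef] at hmax
      push_neg at hmax
      have h1 : Q ≤ 2^(j1+1) * (2^m + 1) := by omega
      have h2 : 2^(j1+1) * (2^m+1) ≤ 2^(j1+1) * 2^(m+1) := by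
        apply Nat.mul_le_mul_left
        have : 1 ≤ 2^m := Nat.one_le_two_pow
        rw [pow_succ]; omega
      have h3 : 2^(j1+1) * 2^(m+1) = 4 * 2^(m + j1) := by
        rw [← pow_add, show j1+1+(m+1) = (m+j1)+2 by omega, pow_add]
        ring
      omega
    have hH3 : (Q : ℝ) ≤ 8 * 2^(m + j1) := by
      have : (Q : ℝ) ≤ 4 * 2^(m+j1) := by
        calc (Q:ℝ) ≤ ((4 * 2^(m+j1) : ℕ) : ℝ) := by exact_mod_cast hH3n
          _ = 4 * 2^(m+j1) := by push_cast; ring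
      have hp : (0:ℝ) < 2^(m+j1) := by positivity
      linarith
    -- H4
    have hH4 : (2:ℝ)^m ≤ 4 * 2^j1 := by
      rcases Nat.eq_zero_or_pos m with hm0 | hm1
      · rw [hm0]
        have h1 : (1:ℝ) ≤ 2^j1 := one_le_pow₀ (by norm_num)
        norm_num
        linarith
      · have hQm : 2^(3*m+4) < Q := mkOf_big a hq k hm1
        have hPm : P m := by
          simp only [hPdef]
          have h1 : 2^m * (2^m + 1) ≤ 2^m * 2^(m+1) := by
            apply Nat.mul_le_mul_left
            have : 1 ≤ 2^m := Nat.one_le_two_pow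
            rw [pow_succ]; omega
          have h2 : 2^m * 2^(m+1) = 2^(2*m+1) := by rw [← pow_add]; ring_nf
          have h3 : 2^(2*m+1) ≤ 2^(3*m+4) := Nat.pow_le_pow_right (by norm_num) (by omega)
          omega
        have hmQ : m ≤ Q := by
          have h1 : m < 2^m := Nat.lt_two_pow_self
          have h2 : 2^m ≤ 2^(3*m+4) := Nat.pow_le_pow_right (by norm_num) (by omega)
          omega
        have hj1m : m ≤ j1 := Nat.le_findGreatest hmQ hPm
        have : (2:ℝ)^m ≤ 2^j1 := by
          apply pow_le_pow_right₀ (by norm_num) hj1m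
        have hp : (0:ℝ) < 2^j1 := by positivity
        linarith
    exact block_force y ε Q m j1 hQ2 hε hε16 hchain hH3 hH4
  · -- degenerate: Q = 2
    have hm0 : m = 0 := by
      by_contra hm
      exact hbase (hbase_of_m (by omega))
    have hQeq : Q = 2 := by
      rw [hm0] at hbase
      simp at hbase
      omega
    have h1mem : RsetP a hq k 1 := Or.inl rfl
    have := hB 1 h1mem
    have e1 : (((1 * a (k-1) : ℕ)) : ℝ) * xt = y := by push_cast [hydef]; ring
    rw [e1] at this
    rw [hQeq]
    norm_num
    linarith

lemma nint_fract_cases {t c : ℝ} (h0 : 0 ≤ t) (h1 : t < 1) (h : nint t ≤ c) :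
    t ≤ c ∨ 1 - t ≤ c := by
  unfold nint at h
  rcases le_or_gt (round t) 0 with hr | hr
  · left
    have h2 : (round t : ℝ) ≤ 0 := by exact_mod_cast hr
    have h3 : t - round t ≤ |t - round t| := le_abs_self _
    linarith
  · right
    have h2 : (1:ℝ) ≤ round t := by exact_mod_cast hr
    have h3 : (round t : ℝ) - t ≤ |t - round t| := by
      rw [abs_sub_comm]; exact le_abs_self _
    linarith


end Aux

/-- for any arithmetic sequence with unbounded ratio sequence, there is an
arithmetic-type sequence with unbounded ratio whose characterized subgroup is countable. -/
theorem exists_arithType_unbounded_ratio_countable (a : ℕ → ℕ) (ha : IsArithSeq a)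
    (hq : ∀ C : ℕ, ∃ n, 1 ≤ n ∧ C < ratioSeq a n) :
    ∃ e : ℕ → ℕ, IsArithTypeSeq a e ∧
      (∀ C : ℕ, ∃ n, C * e n < e (n + 1)) ∧ (charSub e).Countable := by
  classical
  set e := Nat.nth (EmemP a hq) with hedef
  have hEinf := E_infinite a ha hq
  have hemono : StrictMono e := Nat.nth_strictMono hEinf
  have herange : Set.range e = setOf (EmemP a hq) := Nat.range_nth_of_infinite hEinf
  have hapos := apos a ha
  refine ⟨e, ⟨hemono, ?_, ?_⟩, ?_, ?_⟩
  · intro k _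
    rw [herange]; exact a_mem_E a hq k
  · rw [herange]
    rintro x ⟨k, hk, r, hr, rfl⟩
    exact ⟨k, hk, r, (Rset_bounds a ha hq k r hk hr).1,
      (Rset_bounds a ha hq k r hk hr).2, rfl⟩
  · -- unbounded ratios
    intro C
    set k := kkAux a hq (C+1) with hkdef
    have hspec := kkAux_spec a hq C
    have hk1 : 1 ≤ k := hspec.1
    have hQbig : 2^(3*(C+1)+4) < ratioSeq a k := hspec.2.2
    have hmk : mkOf a hq k = C + 1 := mkOf_special a ha hq C
    have hmem : EmemP a hq (a (k-1)) := ⟨k, hk1, 1, Or.inl rfl, (one_mul _).symm⟩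
    obtain ⟨n, hn⟩ : a (k-1) ∈ Set.range e := by rw [herange]; exact hmem
    refine ⟨n, ?_⟩
    have hsucc : EmemP a hq (e (n+1)) := by
      have : e (n+1) ∈ Set.range e := ⟨n+1, rfl⟩
      rwa [herange] at this
    obtain ⟨k', hk'1, r', hr', heq⟩ := hsucc
    have hgt : a (k-1) < e (n+1) := by rw [← hn]; exact hemono (by omega)
    have hbound := Rset_bounds a ha hq k' r' hk'1 hr'
    have hkey : 2^(C+1) * a (k-1) ≤ e (n+1) := by
      rcases lt_trichotomy k' k with h | h | h
      · exfalso
        have h2 : r' * a (k'-1) ≤ (ratioSeq a k' - 1) * a (k'-1) :=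
          Nat.mul_le_mul_right _ hbound.2
        have h3 : (ratioSeq a k' - 1) * a (k'-1) < ratioSeq a k' * a (k'-1) := by
          apply (Nat.mul_lt_mul_right (hapos (k'-1))).mpr
          have := Q2 a ha k' hk'1
          omega
        have h4 : ratioSeq a k' * a (k'-1) = a k' := (aQ a ha k' hk'1).symm
        have h5 : a k' ≤ a (k-1) := ha.2.1.monotone (by omega)
        omega
      · rw [h] at heq hr'
        rcases hr' with rfl | ⟨j, hj, _⟩
        · omega
        · have hr1 : r1of a hq k = 2^(C+1) := by rw [r1of, hmk]
          have hge : 2^(C+1) ≤ r' := by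
            have h2j : 1 ≤ 2^j := Nat.one_le_two_pow
            rcases hj with rfl | rfl
            · rw [hr1]
              calc 2^(C+1) = 1 * 2^(C+1) := (one_mul _).symm
                _ ≤ 2^j * 2^(C+1) := Nat.mul_le_mul_right _ h2j
            · rw [hr1]
              calc 2^(C+1) ≤ 2^(C+1) + 1 := by omega
                _ = 1 * (2^(C+1) + 1) := (one_mul _).symm
                _ ≤ 2^j * (2^(C+1) + 1) := Nat.mul_le_mul_right _ h2j
          rw [heq]
          exact Nat.mul_le_mul_right _ hge
      · have h1 : a k ≤ a (k'-1) := ha.2.1.monotone (by omega)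
        have h2 : a k = ratioSeq a k * a (k-1) := aQ a ha k hk1
        have h3 : 2^(C+1) ≤ ratioSeq a k := by
          have h5 : 2^(C+1) ≤ 2^(3*(C+1)+4) := Nat.pow_le_pow_right (by norm_num) (by omega)
          exact (h5.trans_lt hQbig).le
        have h4 : a (k'-1) ≤ r' * a (k'-1) := by
          calc a (k'-1) = 1 * a (k'-1) := (one_mul _).symm
            _ ≤ r' * a (k'-1) := Nat.mul_le_mul_right _ hbound.1
        calc 2^(C+1) * a (k-1) ≤ ratioSeq a k * a (k-1) := Nat.mul_le_mul_right _ h3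
          _ = a k := h2.symm
          _ ≤ a (k'-1) := h1
          _ ≤ r' * a (k'-1) := h4
          _ = e (n+1) := heq.symm
    have hClt : C < 2^(C+1) := by
      have h6 : C < 2^C := Nat.lt_two_pow_self (n := C)
      have h7 : 2^C ≤ 2^(C+1) := Nat.pow_le_pow_right (by norm_num) (by omega)
      omega
    calc C * e n = C * a (k-1) := by rw [hn]
      _ < 2^(C+1) * a (k-1) := (Nat.mul_lt_mul_right (hapos _)).mpr hClt
      _ ≤ e (n+1) := hkey
  · -- countability
    apply Set.Countable.mono ?_
      (Set.countable_range (fun p : ℤ × ℕ => (((p.1 : ℝ) / (a p.2 : ℝ) : ℝ) : Circle1)))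
    intro x hx
    obtain ⟨xt, rfl⟩ := QuotientAddGroup.mk_surjective x
    have hx' : Tendsto (fun n => (e n) • ((xt : ℝ) : Circle1)) atTop (𝓝 0) := hx
    -- bridges
    have hsmul : ∀ (n : ℕ) (u : ℝ), (n • ((u : ℝ) : Circle1)) = (((n : ℝ) * u : ℝ) : Circle1) := by
      intro n u
      induction n with
      | zero => simp
      | succ n ih =>
        rw [succ_nsmul, ih]
        have hcast : ((n+1 : ℕ) : ℝ) * u = (n:ℝ) * u + u := by push_cast; ring
        rw [hcast]
        rfl
    have hnorm : ∀ u : ℝ, ‖((u : ℝ) : Circle1)‖ = nint u := by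
      intro u
      rw [AddCircle.norm_eq]
      simp [nint]
    have hconv : ∀ ε : ℝ, 0 < ε → ∃ N, ∀ n, N ≤ n → nint ((e n : ℝ) * xt) < ε := by
      intro ε hε
      obtain ⟨N, hN⟩ := Metric.tendsto_atTop.mp hx' ε hε
      refine ⟨N, fun n hn => ?_⟩
      have := hN n hn
      rw [dist_zero_right, hsmul, hnorm] at this
      exact this
    have hBig : ∀ ε : ℝ, 0 < ε → ∃ K, 1 ≤ K ∧ ∀ k, K ≤ k → ∀ r, RsetP a hq k r →
        nint (((r * a (k-1) : ℕ) : ℝ) * xt) ≤ ε := by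
      intro ε hε
      obtain ⟨N, hN⟩ := hconv ε hε
      refine ⟨e N + 2, by omega, ?_⟩
      intro k hk r hr
      have hk1 : 1 ≤ k := by omega
      have hmem : EmemP a hq (r * a (k-1)) := ⟨k, hk1, r, hr, rfl⟩
      obtain ⟨n, hn⟩ : r * a (k-1) ∈ Set.range e := by rw [herange]; exact hmem
      have hra : a (k-1) ≤ r * a (k-1) := by
        calc a (k-1) = 1 * a (k-1) := (one_mul _).symm
          _ ≤ r * a (k-1) := Nat.mul_le_mul_right _ (Rset_bounds a ha hq k r hk1 hr).1
      have h2 : e N < a (k-1) := by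
        have h3 : e N + 1 ≤ k - 1 := by omega
        have h4 : e N + 1 ≤ a (e N + 1) := ha.2.1.le_apply
        have h5 : a (e N + 1) ≤ a (k-1) := ha.2.1.monotone h3
        omega
      have hNn : N ≤ n := by
        have hlt : e N < e n := by omega
        exact le_of_lt (hemono.lt_iff_lt.mp hlt)
      have := hN n hNn
      rw [hn] at this
      exact this.le
    have hTb : ∀ ε : ℝ, 0 < ε → ε ≤ 1/16 → ∃ K, 1 ≤ K ∧ ∀ k, K ≤ k →
        nint ((a (k-1) : ℝ) * xt) ≤ 8 * ε / (ratioSeq a k : ℝ) := by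
      intro ε h1 h2
      obtain ⟨K, hK1, hK⟩ := hBig ε h1
      exact ⟨K, hK1, fun k hk =>
        block_apply a ha hq xt ε k (by omega) h1 h2 (hK k hk)⟩
    -- the digit analysis
    set T : ℕ → ℝ := fun k => Int.fract ((a k : ℝ) * xt) with hTdef
    have hT0 : ∀ k, 0 ≤ T k := fun k => Int.fract_nonneg _
    have hT1 : ∀ k, T k < 1 := fun k => Int.fract_lt_one _
    have hnintT : ∀ k, nint (T k) = nint ((a k : ℝ) * xt) := by
      intro k
      show nint (Int.fract ((a k : ℝ) * xt)) = nint ((a k : ℝ) * xt)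
      have h2 := nint_add_int (Int.fract ((a k : ℝ) * xt)) ⌊(a k : ℝ) * xt⌋
      rw [Int.fract_add_floor] at h2
      exact h2.symm
    have hrec : ∀ k, 1 ≤ k → ∃ c : ℤ, (ratioSeq a k : ℝ) * T (k-1) = c + T k := by
      intro k hk
      refine ⟨⌊(a k : ℝ) * xt⌋ - (ratioSeq a k : ℤ) * ⌊(a (k-1) : ℝ) * xt⌋, ?_⟩
      have hak : (a k : ℝ) = (ratioSeq a k : ℝ) * (a (k-1) : ℝ) := by
        have := aQ a ha k hk
        exact_mod_cast congrArg (fun n : ℕ => (n : ℝ)) this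
      simp only [hTdef, Int.fract]
      push_cast
      rw [hak]
      ring
    obtain ⟨K0, hK01, hK0⟩ := hTb (1/32) (by norm_num) (by norm_num)
    have hQR : ∀ k, 1 ≤ k → (2:ℝ) ≤ (ratioSeq a k : ℝ) := by
      intro k hk; exact_mod_cast Q2 a ha k hk
    have hbound : ∀ k, K0 ≤ k → nint (T (k-1)) ≤ 1 / (4 * (ratioSeq a k : ℝ)) := by
      intro k hk
      have h1 := hK0 k hk
      calc nint (T (k-1)) = nint ((a (k-1) : ℝ) * xt) := hnintT (k-1)
        _ ≤ 8 * (1/32) / (ratioSeq a k : ℝ) := h1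
        _ = 1 / (4 * (ratioSeq a k : ℝ)) := by
            rw [show (8:ℝ) * (1/32) = 1/4 by norm_num, div_div]
    have hcases : ∀ k, K0 ≤ k → T (k-1) ≤ 1/(4 * (ratioSeq a k : ℝ)) ∨
        1 - T (k-1) ≤ 1/(4 * (ratioSeq a k : ℝ)) :=
      fun k hk => nint_fract_cases (hT0 _) (hT1 _) (hbound k hk)
    have hupstep : ∀ k, K0 ≤ k → 1 - T (k-1) ≤ 1/(4 * (ratioSeq a k : ℝ)) →
        (1 - T k ≤ 1/(4 * (ratioSeq a (k+1) : ℝ)) ∧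
          1 - T k = (ratioSeq a k : ℝ) * (1 - T (k-1))) := by
      intro k hk hup
      have hk1 : 1 ≤ k := by omega
      obtain ⟨c, hc⟩ := hrec k hk1
      have hQk := hQR k hk1
      have hQpos : (0:ℝ) < (ratioSeq a k : ℝ) := by linarith
      have hqq : (ratioSeq a k : ℝ) * (1/(4 * (ratioSeq a k : ℝ))) = 1/4 := by
        field_simp
      have hT0k := hT0 k; have hT1k := hT1 k
      have hT0k1 := hT0 (k-1); have hT1k1 := hT1 (k-1)
      have hcub : (c:ℝ) < (ratioSeq a k : ℝ) := by nlinarith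
      have hclb : (ratioSeq a k : ℝ) - 2 < (c:ℝ) := by nlinarith
      have hceq : (c:ℝ) = (ratioSeq a k : ℝ) - 1 := by
        have h1 : c < (ratioSeq a k : ℤ) := by exact_mod_cast hcub
        have h2 : (ratioSeq a k : ℤ) - 2 < c := by exact_mod_cast hclb
        have h3 : c = (ratioSeq a k : ℤ) - 1 := by omega
        rw [h3]; push_cast; ring
      have heq2 : 1 - T k = (ratioSeq a k : ℝ) * (1 - T (k-1)) := by
        have h4 : (ratioSeq a k : ℝ) * (1 - T (k-1)) =
            (ratioSeq a k : ℝ) - (ratioSeq a k : ℝ) * T (k-1) := by ring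
        rw [h4, hc, hceq]; ring
      have hTk34 : (3:ℝ)/4 ≤ T k := by
        have h1 : (ratioSeq a k : ℝ) * (1 - T (k-1)) ≤
            (ratioSeq a k : ℝ) * (1/(4 * (ratioSeq a k : ℝ))) :=
          mul_le_mul_of_nonneg_left hup hQpos.le
        rw [hqq] at h1
        linarith [heq2]
      rcases hcases (k+1) (by omega) with hlo | hup2
      · exfalso
        have hQk1 := hQR (k+1) (by omega)
        have hsimp : (k+1) - 1 = k := by omega
        rw [hsimp] at hlo
        have h6 : 1/(4 * (ratioSeq a (k+1) : ℝ)) ≤ 1/8 := by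
          apply one_div_le_one_div_of_le <;> linarith
        linarith
      · have hsimp : (k+1) - 1 = k := by omega
        rw [hsimp] at hup2
        exact ⟨hup2, heq2⟩
    have hup_false : ∀ k, K0 ≤ k → ¬ (1 - T (k-1) ≤ 1/(4 * (ratioSeq a k : ℝ))) := by
      intro k hk hup
      have hiter : ∀ i, (1 - T (k+i-1) ≤ 1/(4 * (ratioSeq a (k+i) : ℝ))) ∧
          2^i * (1 - T (k-1)) ≤ 1 - T (k+i-1) := by
        intro i
        induction i with
        | zero =>
          constructor
          · simpa using hup
          · simp
        | succ i ih =>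
          have hstep := hupstep (k+i) (by omega) ih.1
          have he1 : k + (i+1) - 1 = k + i := by omega
          have he2 : k + (i+1) = k + i + 1 := by omega
          constructor
          · rw [he1, he2]
            exact hstep.1
          · rw [he1]
            have hQge := hQR (k+i) (by omega)
            have hnn : 0 ≤ 1 - T (k+i-1) := by linarith [hT1 (k+i-1)]
            have h2 : 2 * (1 - T (k+i-1)) ≤ (ratioSeq a (k+i) : ℝ) * (1 - T (k+i-1)) :=
              mul_le_mul_of_nonneg_right hQge hnn
            have h3 : 2 * (2^i * (1 - T (k-1))) ≤ 2 * (1 - T (k+i-1)) := by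
              linarith [ih.2]
            calc 2^(i+1) * (1 - T (k-1)) = 2 * (2^i * (1 - T (k-1))) := by ring
              _ ≤ 2 * (1 - T (k+i-1)) := h3
              _ ≤ (ratioSeq a (k+i) : ℝ) * (1 - T (k+i-1)) := h2
              _ = 1 - T (k+i) := hstep.2.symm
      have hpos : 0 < 1 - T (k-1) := by linarith [hT1 (k-1)]
      obtain ⟨i, hi⟩ := pow_unbounded_of_one_lt ((1:ℝ)/(1 - T (k-1)))
        (by norm_num : (1:ℝ) < 2)
      have h1 := (hiter i).2
      have h2 : 1 - T (k+i-1) ≤ 1 := by linarith [hT0 (k+i-1)]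
      have h3 : 1 < 2^i * (1 - T (k-1)) := by
        rw [div_lt_iff₀ hpos] at hi
        linarith
      linarith
    have hlow : ∀ k, K0 ≤ k → T (k-1) ≤ 1/(4 * (ratioSeq a k : ℝ)) := by
      intro k hk
      rcases hcases k hk with h | h
      · exact h
      · exact absurd h (hup_false k hk)
    have hczero : ∀ k, K0 ≤ k → T k = (ratioSeq a k : ℝ) * T (k-1) := by
      intro k hk
      have hk1 : 1 ≤ k := by omega
      obtain ⟨c, hc⟩ := hrec k hk1
      have hQk := hQR k hk1
      have hQpos : (0:ℝ) < (ratioSeq a k : ℝ) := by linarith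
      have hl := hlow k hk
      have hqq : (ratioSeq a k : ℝ) * (1/(4 * (ratioSeq a k : ℝ))) = 1/4 := by
        field_simp
      have hub : (c:ℝ) < 1 := by nlinarith [hT0 k, hT0 (k-1), hT1 k]
      have hlb : (-1:ℝ) < (c:ℝ) := by nlinarith [hT0 (k-1), hT1 k]
      have hc0 : c = 0 := by
        have h1 : c < 1 := by exact_mod_cast hub
        have h2 : (-1:ℤ) < c := by exact_mod_cast hlb
        omega
      rw [hc0] at hc
      push_cast at hc
      linarith
    have hgrow : ∀ i, 2^i * T (K0 - 1) ≤ T (K0 - 1 + i) := by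
      intro i
      induction i with
      | zero => simp
      | succ i ih =>
        have he1 : K0 - 1 + (i+1) = K0 + i := by omega
        have he2 : K0 + i - 1 = K0 - 1 + i := by omega
        have hcz := hczero (K0 + i) (by omega)
        rw [he2] at hcz
        have hQge := hQR (K0+i) (by omega)
        have hTnn := hT0 (K0 - 1 + i)
        rw [he1, hcz]
        calc 2^(i+1) * T (K0-1) = 2 * (2^i * T (K0-1)) := by ring
          _ ≤ 2 * T (K0 - 1 + i) := by linarith
          _ ≤ (ratioSeq a (K0+i) : ℝ) * T (K0-1+i) :=
            mul_le_mul_of_nonneg_right hQge hTnn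
    have hTzero : T (K0 - 1) = 0 := by
      by_contra h
      have hpos : 0 < T (K0-1) := lt_of_le_of_ne (hT0 _) (Ne.symm h)
      obtain ⟨i, hi⟩ := pow_unbounded_of_one_lt ((1:ℝ)/(T (K0-1)))
        (by norm_num : (1:ℝ) < 2)
      have h1 := hgrow i
      have h2 := hT1 (K0 - 1 + i)
      have h3 : 1 < 2^i * T (K0-1) := by
        rw [div_lt_iff₀ hpos] at hi
        linarith
      linarith
    have hz : ((a (K0-1) : ℝ)) * xt = (⌊(a (K0-1) : ℝ) * xt⌋ : ℤ) := by
      have h1 : (a (K0-1) : ℝ) * xt - ⌊(a (K0-1) : ℝ) * xt⌋ = 0 := hTzero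
      linarith
    have hane : (a (K0-1) : ℝ) ≠ 0 := by
      exact_mod_cast (hapos (K0-1)).ne'
    have hreq : ((⌊(a (K0-1) : ℝ) * xt⌋ : ℝ)) / (a (K0-1) : ℝ) = xt := by
      rw [← hz]
      field_simp
    refine ⟨(⌊(a (K0-1) : ℝ) * xt⌋, K0 - 1), ?_⟩
    show ((((⌊(a (K0-1) : ℝ) * xt⌋ : ℤ) : ℝ) / (a (K0-1) : ℝ) : ℝ) : Circle1)
        = ((xt : ℝ) : Circle1)
    rw [hreq]
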